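/- Let H=(V,E,w) be a honeycomb such that every semiinfinite edge e of H has integer constant dual coordinate d^c(e), and such that div_w(v)=0 for every nonintegral vertex v of H. Then every edge e of H satisfies d^c(e) ∈ ℤ (and consequently all dual coordinates of all vertices of H are integers). -/

import Mathlib

open scoped BigOperators

attribute [local instance] Classical.propDecidable

noncomputable section

/-- Points of the plane. -/
abbrev Pt : Type := ℝ × ℝ

/-- Inner product on the plane. -/
def pdot (a b : Pt) : ℝ := a.1 * b.1 + a.2 * b.2

/-- The three generating vectors ξ₁ = (1,0), ξ₂ = (−1/2, √3/2), ξ₃ = (−1/2, −√3/2). -/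
noncomputable def xiv : Fin 3 → Pt
  | 0 => ((1 : ℝ), (0 : ℝ))
  | 1 => (-(1 / 2 : ℝ), Real.sqrt 3 / 2)
  | 2 => (-(1 / 2 : ℝ), -(Real.sqrt 3 / 2))

/-- Dual coordinates d_i(x) = −x·ξ_i. -/
noncomputable def dcoord (i : Fin 3) (x : Pt) : ℝ := -(pdot x (xiv i))

/-- Direction of the ray Ξ_i^s(·): ξ_i rotated by −90° for s = +(true), by +90° for
s = −(false), so that Ξ_i⁺(v)−v, ℝ₊ξ_i, Ξ_i⁻(v)−v follow anticlockwise. -/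
noncomputable def rayDir (i : Fin 3) (s : Bool) : Pt :=
  if s then ((xiv i).2, -(xiv i).1) else (-(xiv i).2, (xiv i).1)

/-- The ray Ξ_i^s(v). -/
def XiRay (i : Fin 3) (s : Bool) (v : Pt) : Set Pt :=
  {x | ∃ t : ℝ, 0 ≤ t ∧ x = v + t • rayDir i s}

/-- A finite line (nondegenerate segment). -/
def IsSegL (S : Set Pt) : Prop := ∃ a b : Pt, a ≠ b ∧ S = segment ℝ a b

/-- A semiinfinite line (ray) with end a. -/
def IsRayFrom (a : Pt) (S : Set Pt) : Prop :=
  ∃ d : Pt, d ≠ 0 ∧ S = {x | ∃ t : ℝ, 0 ≤ t ∧ x = a + t • d}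

/-- A semiinfinite line (ray). -/
def IsRayL (S : Set Pt) : Prop := ∃ a : Pt, IsRayFrom a S

/-- A fully infinite line. -/
def IsFullLineL (S : Set Pt) : Prop := ∃ a d : Pt, d ≠ 0 ∧ S = {x | ∃ t : ℝ, x = a + t • d}

/-- A line: a segment, a ray or a full line. -/
def IsLineL (S : Set Pt) : Prop := IsSegL S ∨ IsRayL S ∨ IsFullLineL S

/-- `S` is perpendicular to ξ_i, i.e. the dual coordinate d_i is constant on S. -/
def PerpTo (i : Fin 3) (S : Set Pt) : Prop := ∀ x ∈ S, ∀ y ∈ S, pdot (x - y) (xiv i) = 0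

/-- w_i^s(v): the total weight of the lines of the system whose intersection with
Ξ_i^s(v) contains v and is a line (not a point). -/
noncomputable def wis (L : Finset (Set Pt)) (w : Set Pt → ℤ) (i : Fin 3) (s : Bool)
    (v : Pt) : ℤ :=
  ∑ ℓ ∈ L.filter (fun ℓ => v ∈ ℓ ∧ IsLineL (ℓ ∩ XiRay i s v)), w ℓ

/-- A Ξ-system: a finite set of lines, each perpendicular to some ξ_i. -/
def IsXiSystem (L : Finset (Set Pt)) : Prop := ∀ ℓ ∈ L, IsLineL ℓ ∧ ∃ i : Fin 3, PerpTo i ℓ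

/-- A pre-honeycomb: a Ξ-system with all w_i^s(v) nonnegative satisfying the
divergency (zero-tension) condition at every point. -/
def IsPreHoneycomb (L : Finset (Set Pt)) (w : Set Pt → ℤ) : Prop :=
  IsXiSystem L ∧ (∀ (v : Pt) (i : Fin 3) (s : Bool), 0 ≤ wis L w i s v) ∧
  ∀ (v : Pt) (i j : Fin 3),
    wis L w i true v - wis L w i false v = wis L w j true v - wis L w j false v

/-- The divergency div_w(v). -/
noncomputable def divw (L : Finset (Set Pt)) (w : Set Pt → ℤ) (v : Pt) : ℤ :=
  wis L w 0 true v - wis L w 0 false v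

/-- An interior (non-end) point of a line. -/
def InteriorPt (S : Set Pt) (x : Pt) : Prop :=
  x ∈ S ∧ ∃ d : Pt, d ≠ 0 ∧ ∃ ε : ℝ, 0 < ε ∧ ∀ t : ℝ, |t| ≤ ε → x + t • d ∈ S

/-- `v` is an end of the line `S` (so `S` is incident to `v` as a graph edge). -/
def IsEnd (v : Pt) (S : Set Pt) : Prop := v ∈ S ∧ ¬ InteriorPt S v

/-- A honeycomb: a (non-standard) planar graph with a nonempty finite vertex set, whose
edges are positively weighted lines, each vertex incident with at least 3 edges, no
interior point of an edge lying on another edge, the ends of edges being vertices, and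
the weighted edge set forming a pre-honeycomb. -/
structure Honeycomb : Type where
  verts : Finset Pt
  edges : Finset (Set Pt)
  w : Set Pt → ℤ
  verts_nonempty : verts.Nonempty
  degree : ∀ v ∈ verts, 3 ≤ (edges.filter fun e => IsEnd v e).card
  no_cross : ∀ e ∈ edges, ∀ e' ∈ edges, e ≠ e' → ∀ x : Pt, InteriorPt e x → x ∉ e'
  w_pos : ∀ e ∈ edges, 0 < w e
  ends_mem : ∀ e ∈ edges, ∀ x : Pt, IsEnd x e → x ∈ verts
  edge_touch : ∀ e ∈ edges, ∃ v ∈ verts, v ∈ e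
  pre : IsPreHoneycomb edges w

/-- The constant dual coordinate of the edge `e` is an integer. -/
def EdgeIntegral (e : Set Pt) : Prop :=
  ∀ i : Fin 3, PerpTo i e → ∀ x ∈ e, ∃ z : ℤ, dcoord i x = (z : ℝ)

-- basic algebra helpers
lemma xiv_norm (i : Fin 3) : (xiv i).1 ^ 2 + (xiv i).2 ^ 2 = 1 := by
  have h3 : Real.sqrt 3 ^ 2 = 3 := Real.sq_sqrt (by norm_num)
  fin_cases i <;> simp [xiv] <;> nlinarith [h3]

lemma xiv_indep {i j : Fin 3} (hij : i ≠ j) {u : Pt}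
    (hi : pdot u (xiv i) = 0) (hj : pdot u (xiv j) = 0) : u = 0 := by
  have h3 : Real.sqrt 3 ^ 2 = 3 := Real.sq_sqrt (by norm_num)
  have h3' : (0:ℝ) < Real.sqrt 3 := Real.sqrt_pos.mpr (by norm_num)
  have h1 : u.1 = 0 ∧ u.2 = 0 := by
    constructor <;> fin_cases i <;> fin_cases j <;> simp only [xiv, pdot] at hi hj <;>
      first
        | exact absurd rfl hij
        | nlinarith [h3, h3', hi, hj]
  have : u = (0, 0) := Prod.ext h1.1 h1.2
  exact this

lemma rayDir_false (i : Fin 3) : rayDir i false = -rayDir i true := by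
  simp [rayDir, Prod.ext_iff]

lemma pdot_rayDir_xiv (i : Fin 3) : pdot (rayDir i true) (xiv i) = 0 := by
  simp [rayDir, pdot]; ring

lemma pdot_rayDir_self (i : Fin 3) : pdot (rayDir i true) (rayDir i true) = 1 := by
  have := xiv_norm i
  simp only [rayDir, if_true, pdot]
  nlinarith

lemma rayDir_ne_zero (i : Fin 3) (s : Bool) : rayDir i s ≠ 0 := by
  intro h
  have hn := xiv_norm i
  cases s <;> simp [rayDir, Prod.ext_iff] at h <;> rw [h.1, h.2] at hn <;> simp at hn

lemma pdot_sub_left (a b c : Pt) : pdot (a - b) c = pdot a c - pdot b c := by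
  simp [pdot, Prod.fst_sub, Prod.snd_sub]; ring

lemma pdot_add_left (a b c : Pt) : pdot (a + b) c = pdot a c + pdot b c := by
  simp [pdot, Prod.fst_add, Prod.snd_add]; ring

lemma pdot_smul_left (t : ℝ) (a c : Pt) : pdot (t • a) c = t * pdot a c := by
  simp [pdot, Prod.smul_fst, Prod.smul_snd, smul_eq_mul]; ring

/-- decomposition: a vector orthogonal to ξ_i is a multiple of rayDir i true -/
lemma perp_decomp {i : Fin 3} {u : Pt} (h : pdot u (xiv i) = 0) :
    u = (pdot u (rayDir i true)) • rayDir i true := by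
  have hn := xiv_norm i
  set a := (xiv i).1 with ha
  set b := (xiv i).2 with hbb
  have h' : u.1 * a + u.2 * b = 0 := h
  refine Prod.ext ?_ ?_
  · show u.1 = (u.1 * b + u.2 * (-a)) * b
    linear_combination a * h' - u.1 * hn
  · show u.2 = (u.1 * b + u.2 * (-a)) * (-a)
    linear_combination b * h' - u.2 * hn
lemma pdot_neg_left (a c : Pt) : pdot (-a) c = -pdot a c := by
  simp [pdot]; ring

lemma dcoord_sum (x : Pt) : dcoord 0 x + dcoord 1 x + dcoord 2 x = 0 := by
  show -(pdot x (xiv 0)) + -(pdot x (xiv 1)) + -(pdot x (xiv 2)) = 0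
  simp [pdot, xiv]; ring

lemma perp_pt {i : Fin 3} {x y : Pt} : dcoord i x = dcoord i y ↔ pdot (x - y) (xiv i) = 0 := by
  unfold dcoord
  rw [pdot_sub_left]
  constructor <;> intro h <;> linarith

lemma dcoord_eq_of_perp {i : Fin 3} {e : Set Pt} (h : PerpTo i e) {x y : Pt}
    (hx : x ∈ e) (hy : y ∈ e) : dcoord i x = dcoord i y :=
  perp_pt.mpr (h x hx y hy)

lemma decomp_pt {i : Fin 3} {x v : Pt} (h : dcoord i x = dcoord i v) :
    x = v + (pdot (x - v) (rayDir i true)) • rayDir i true := by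
  have h2 := perp_decomp (i := i) (u := x - v) (perp_pt.mp h)
  rw [← h2]; abel

lemma linel_two_points {S : Set Pt} (h : IsLineL S) : ∃ x ∈ S, ∃ y ∈ S, x ≠ y := by
  rcases h with ⟨a, b, hab, rfl⟩ | ⟨a, d, hd, rfl⟩ | ⟨a, d, hd, rfl⟩
  · exact ⟨a, left_mem_segment ℝ a b, b, right_mem_segment ℝ a b, hab⟩
  · refine ⟨a, ⟨0, le_refl 0, by simp⟩, a + d, ⟨1, zero_le_one, by simp⟩, ?_⟩
    simpa using hd
  · refine ⟨a, ⟨0, by simp⟩, a + d, ⟨1, by simp⟩, ?_⟩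
    simpa using hd

lemma line_convex {S : Set Pt} (h : IsLineL S) : Convex ℝ S := by
  rcases h with ⟨a, b, hab, rfl⟩ | ⟨a, d, hd, rfl⟩ | ⟨a, d, hd, rfl⟩
  · exact convex_segment a b
  · intro p hp q hq α β hα hβ hαβ
    obtain ⟨t₁, ht₁, rfl⟩ := hp; obtain ⟨t₂, ht₂, rfl⟩ := hq
    refine ⟨α * t₁ + β * t₂, by positivity, ?_⟩
    have h2 : α • (a + t₁ • d) + β • (a + t₂ • d)
        = (α + β) • a + (α * t₁ + β * t₂) • d := by
      simp only [smul_add, smul_smul, add_smul]; abel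
    rw [h2, hαβ, one_smul]
  · intro p hp q hq α β hα hβ hαβ
    obtain ⟨t₁, rfl⟩ := hp; obtain ⟨t₂, rfl⟩ := hq
    refine ⟨α * t₁ + β * t₂, ?_⟩
    have h2 : α • (a + t₁ • d) + β • (a + t₂ • d)
        = (α + β) • a + (α * t₁ + β * t₂) • d := by
      simp only [smul_add, smul_smul, add_smul]; abel
    rw [h2, hαβ, one_smul]

lemma sub_ray (v D : Pt) (t₁ t₂ : ℝ) :
    (v + t₁ • D) - (v + t₂ • D) = (t₁ - t₂) • D := by
  rw [sub_smul]; abel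

lemma pdot_rayDir_xiv' (i : Fin 3) (s : Bool) : pdot (rayDir i s) (xiv i) = 0 := by
  cases s
  · rw [rayDir_false, pdot_neg_left, pdot_rayDir_xiv, neg_zero]
  · exact pdot_rayDir_xiv i

lemma perp_of_inter {i : Fin 3} {s : Bool} {v : Pt} {ℓ : Set Pt}
    (hperp : ∃ j, PerpTo j ℓ) (hline : IsLineL (ℓ ∩ XiRay i s v)) : PerpTo i ℓ := by
  obtain ⟨j, hj⟩ := hperp
  obtain ⟨x, hx, y, hy, hxy⟩ := linel_two_points hline
  by_cases hij : j = i
  · exact hij ▸ hj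
  · exfalso
    obtain ⟨t₁, _, hx2⟩ := hx.2
    obtain ⟨t₂, _, hy2⟩ := hy.2
    have hpi : pdot (x - y) (xiv i) = 0 := by
      rw [hx2, hy2, sub_ray, pdot_smul_left, pdot_rayDir_xiv', mul_zero]
    have hpj : pdot (x - y) (xiv j) = 0 := hj x hx.1 y hy.1
    exact hxy (sub_eq_zero.mp (xiv_indep (Ne.symm hij) hpi hpj))

lemma Honeycomb.no_full (H : Honeycomb) {e : Set Pt} (he : e ∈ H.edges) : ¬ IsFullLineL e := by
  rintro ⟨a, d, hd, rfl⟩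
  obtain ⟨v, hvmem, hv⟩ := H.edge_touch _ he
  have hdeg := H.degree v hvmem
  have hint : InteriorPt {x | ∃ t : ℝ, x = a + t • d} v := by
    obtain ⟨t₀, rfl⟩ := hv
    exact ⟨⟨t₀, rfl⟩, d, hd, 1, one_pos, fun t _ => ⟨t₀ + t, by rw [add_smul]; abel⟩⟩
  obtain ⟨e', he'⟩ : (H.edges.filter fun e => IsEnd v e).Nonempty :=
    Finset.card_pos.mp (by omega)
  rw [Finset.mem_filter] at he'
  have hne : {x : Pt | ∃ t : ℝ, x = a + t • d} ≠ e' := by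
    rintro rfl
    exact he'.2.2 hint
  exact H.no_cross _ he _ he'.1 hne v hint he'.2.1
lemma isCompact_seg {S : Set Pt} (h : IsSegL S) : IsCompact S := by
  obtain ⟨a, b, -, rfl⟩ := h
  rw [segment_eq_image]
  exact isCompact_Icc.image (by continuity)

lemma pdot_cont (D : Pt) : Continuous (fun x : Pt => pdot x D) := by
  unfold pdot
  exact (continuous_fst.mul continuous_const).add (continuous_snd.mul continuous_const)

lemma edge_integral (H : Honeycomb)
    (hb : ∀ e ∈ H.edges, IsRayL e → EdgeIntegral e)
    (hv : ∀ v ∈ H.verts, (∃ i : Fin 3, ∀ z : ℤ, dcoord i v ≠ (z : ℝ)) →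
      divw H.edges H.w v = 0) :
    ∀ e ∈ H.edges, EdgeIntegral e := by
  by_contra hcon
  push_neg at hcon
  obtain ⟨e₀, he₀, hni⟩ := hcon
  rw [EdgeIntegral] at hni
  push_neg at hni
  obtain ⟨i, hperp₀, x₀, hx₀, hc⟩ := hni
  set c := dcoord i x₀ with hcdef
  set D := rayDir i true with hD
  set S := H.edges.filter (fun e => PerpTo i e ∧ ∀ x ∈ e, dcoord i x = c) with hS
  have hmemS : ∀ e ∈ S, e ∈ H.edges ∧ PerpTo i e ∧ ∀ x ∈ e, dcoord i x = c := by
    intro e he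
    rw [hS, Finset.mem_filter] at he
    exact ⟨he.1, he.2.1, he.2.2⟩
  have hseg : ∀ e ∈ S, IsSegL e := by
    intro e he
    obtain ⟨heE, hp, hcc⟩ := hmemS e he
    rcases (H.pre.1 e heE).1 with hs | hr | hf
    · exact hs
    · exfalso
      obtain ⟨x, hx, -⟩ := linel_two_points (Or.inr (Or.inl hr))
      obtain ⟨z, hz⟩ := hb e heE hr i hp x hx
      exact hc z (by rw [← hcc x hx]; exact hz)
    · exact absurd hf (H.no_full heE)
  have he₀S : e₀ ∈ S := by
    rw [hS, Finset.mem_filter]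
    exact ⟨he₀, hperp₀, fun x hx => dcoord_eq_of_perp hperp₀ hx hx₀⟩
  set U : Set Pt := ⋃ e ∈ S, (e : Set Pt) with hU
  have hUc : IsCompact U := S.isCompact_biUnion (fun e he => isCompact_seg (hseg e he))
  have hUne : U.Nonempty := ⟨x₀, Set.mem_biUnion he₀S hx₀⟩
  obtain ⟨p, hpU, hpmax⟩ := hUc.exists_isMaxOn hUne (pdot_cont D).continuousOn
  replace hpmax := isMaxOn_iff.mp hpmax
  obtain ⟨estar, heS', hpe⟩ := Set.mem_iUnion₂.mp hpU
  have heS : estar ∈ S := heS'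
  have hpc : dcoord i p = c := (hmemS _ heS).2.2 p hpe
  -- p is an end of estar
  have hend : IsEnd p estar := by
    refine ⟨hpe, ?_⟩
    rintro ⟨-, d, hd0, ε, hε, hmem⟩
    have h1 := hmem ε (le_of_eq (abs_of_pos hε))
    have h2 := hmem (-ε) (by rw [abs_neg]; exact le_of_eq (abs_of_pos hε))
    have hphi : pdot d (xiv i) = 0 := by
      have hcc := (hmemS _ heS).2.2 _ h1
      have h' : pdot ((p + ε • d) - p) (xiv i) = 0 := perp_pt.mp (by rw [hcc, hpc])
      have h'' : (p + ε • d) - p = ε • d := by abel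
      rw [h'', pdot_smul_left] at h'
      rcases mul_eq_zero.mp h' with h | h
      · exact absurd h (ne_of_gt hε)
      · exact h
    have hdD : pdot d D ≠ 0 := by
      intro h0
      exact hd0 (by rw [perp_decomp hphi, ← hD, h0, zero_smul])
    have hf : ∀ t : ℝ, pdot (p + t • d) D = pdot p D + t * pdot d D := by
      intro t; rw [pdot_add_left, pdot_smul_left]
    rcases lt_or_gt_of_ne hdD with hneg | hpos
    · have hle := hpmax _ (Set.mem_biUnion heS h2)
      rw [hf (-ε)] at hle
      nlinarith [mul_pos hε (neg_pos.mpr hneg)]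
    · have hle := hpmax _ (Set.mem_biUnion heS h1)
      rw [hf ε] at hle
      nlinarith [mul_pos hε hpos]
  have hpv : p ∈ H.verts := H.ends_mem _ (hmemS _ heS).1 p hend
  have hdiv : divw H.edges H.w p = 0 :=
    hv p hpv ⟨i, fun z hz => hc z (by rw [← hpc]; exact hz)⟩
  have hbal : wis H.edges H.w i true p = wis H.edges H.w i false p := by
    have h1 := H.pre.2.2 p i 0
    unfold divw at hdiv
    linarith
  have hsub : estar ⊆ XiRay i false p := by
    intro x hx
    have hxc : dcoord i x = dcoord i p := by rw [hpc, (hmemS _ heS).2.2 x hx]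
    have hxd := decomp_pt hxc
    refine ⟨-(pdot (x - p) D), ?_, ?_⟩
    · have hs : pdot (x - p) D = pdot x D - pdot p D := pdot_sub_left x p D
      have hle := hpmax _ (Set.mem_biUnion heS hx)
      linarith [hs ▸ (sub_nonpos.mpr hle)]
    · rw [rayDir_false, neg_smul, smul_neg, neg_neg, ← hD]
      exact hxd
  have hmem1 : estar ∈ H.edges.filter
      (fun ℓ => p ∈ ℓ ∧ IsLineL (ℓ ∩ XiRay i false p)) := by
    rw [Finset.mem_filter]
    refine ⟨(hmemS _ heS).1, hpe, ?_⟩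
    rw [Set.inter_eq_left.mpr hsub]
    exact (H.pre.1 _ (hmemS _ heS).1).1
  have hposf : 0 < wis H.edges H.w i false p := by
    apply Finset.sum_pos'
    · intro ℓ hℓ
      exact le_of_lt (H.w_pos ℓ (Finset.mem_of_mem_filter _ hℓ))
    · exact ⟨estar, hmem1, H.w_pos _ (hmemS _ heS).1⟩
  have hpost : 0 < wis H.edges H.w i true p := hbal ▸ hposf
  obtain ⟨ℓ, hℓ⟩ : (H.edges.filter
      (fun ℓ => p ∈ ℓ ∧ IsLineL (ℓ ∩ XiRay i true p))).Nonempty := by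
    by_contra hno
    rw [Finset.not_nonempty_iff_eq_empty] at hno
    unfold wis at hpost
    rw [hno, Finset.sum_empty] at hpost
    exact lt_irrefl 0 hpost
  rw [Finset.mem_filter] at hℓ
  obtain ⟨hℓE, hpℓ, hlineℓ⟩ := hℓ
  have hperpℓ : PerpTo i ℓ := perp_of_inter (H.pre.1 ℓ hℓE).2 hlineℓ
  have hℓS : ℓ ∈ S := by
    rw [hS, Finset.mem_filter]
    exact ⟨hℓE, hperpℓ, fun x hx => by rw [dcoord_eq_of_perp hperpℓ hx hpℓ, hpc]⟩
  obtain ⟨x, hx, y, hy, hxy⟩ := linel_two_points hlineℓ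
  obtain ⟨t₁, ht₁, hx2⟩ := hx.2
  obtain ⟨t₂, ht₂, hy2⟩ := hy.2
  have hfr : ∀ t : ℝ, pdot (p + t • D) D = pdot p D + t := by
    intro t
    rw [pdot_add_left, pdot_smul_left, hD, pdot_rayDir_self, mul_one]
  have hne12 : t₁ ≠ t₂ := fun h => hxy (by rw [hx2, hy2, h])
  rcases lt_or_gt_of_ne hne12 with h | h
  · have hle := hpmax _ (Set.mem_biUnion hℓS hy.1)
    rw [hy2, hfr t₂] at hle
    linarith
  · have hle := hpmax _ (Set.mem_biUnion hℓS hx.1)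
    rw [hx2, hfr t₁] at hle
    linarith
lemma dcoord_sum3 (x : Pt) {i j k : Fin 3} (hij : i ≠ j) (hik : i ≠ k) (hjk : j ≠ k) :
    dcoord i x + dcoord j x + dcoord k x = 0 := by
  have h := dcoord_sum x
  fin_cases i <;> fin_cases j <;> fin_cases k <;>
    first
      | exact absurd rfl hij
      | exact absurd rfl hik
      | exact absurd rfl hjk
      | exact show dcoord 0 x + dcoord 1 x + dcoord 2 x = 0 by linarith
      | exact show dcoord 0 x + dcoord 2 x + dcoord 1 x = 0 by linarith
      | exact show dcoord 1 x + dcoord 0 x + dcoord 2 x = 0 by linarith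
      | exact show dcoord 1 x + dcoord 2 x + dcoord 0 x = 0 by linarith
      | exact show dcoord 2 x + dcoord 0 x + dcoord 1 x = 0 by linarith
      | exact show dcoord 2 x + dcoord 1 x + dcoord 0 x = 0 by linarith

lemma all_int {x : Pt} {i j : Fin 3} (hij : i ≠ j)
    (hi : ∃ z : ℤ, dcoord i x = (z : ℝ)) (hj : ∃ z : ℤ, dcoord j x = (z : ℝ)) :
    ∀ k : Fin 3, ∃ z : ℤ, dcoord k x = (z : ℝ) := by
  obtain ⟨zi, hzi⟩ := hi
  obtain ⟨zj, hzj⟩ := hj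
  intro k
  by_cases hk : k = i
  · exact hk ▸ ⟨zi, hzi⟩
  by_cases hk' : k = j
  · exact hk' ▸ ⟨zj, hzj⟩
  have hs := dcoord_sum3 x hij (Ne.symm hk) (Ne.symm hk')
  refine ⟨-zi - zj, ?_⟩
  push_cast
  linarith

lemma same_side_contra (H : Honeycomb) {e e' : Set Pt} (he : e ∈ H.edges) (he' : e' ∈ H.edges)
    (hne : e ≠ e') {v d : Pt} (hd : d ≠ 0) (hv : v ∈ e) (hv' : v ∈ e')
    {l l' : ℝ} (hl : 0 < l) (hl' : 0 < l')
    (hx : v + l • d ∈ e) (hx' : v + l' • d ∈ e') : False := by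
  set m := min l l' with hm
  have hm0 : 0 < m := lt_min hl hl'
  have key : ∀ (E : Set Pt), E ∈ H.edges → v ∈ E → ∀ L : ℝ, 0 < L → v + L • d ∈ E →
      ∀ μ : ℝ, 0 ≤ μ → μ ≤ L → v + μ • d ∈ E := by
    intro E hE hvE L hL hLE μ h0 h1
    have hconv : Convex ℝ E := line_convex (H.pre.1 E hE).1
    apply hconv.segment_subset hvE hLE
    refine ⟨1 - μ / L, μ / L, ?_, by positivity, by ring, ?_⟩
    · have : μ / L ≤ 1 := (div_le_one hL).mpr h1
      linarith
    · have hμ : μ / L * L = μ := div_mul_cancel₀ μ (ne_of_gt hL)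
      have hcomb : (1 - μ / L) • v + (μ / L) • (v + L • d)
          = ((1 - μ / L) + μ / L) • v + (μ / L * L) • d := by
        simp only [smul_add, smul_smul, add_smul]
        abel
      rw [hcomb, hμ]
      norm_num
  have hz : InteriorPt e (v + (m / 2) • d) := by
    refine ⟨key e he hv l hl hx (m / 2) (by positivity)
      (by rw [hm] at hm0 ⊢; have := min_le_left l l'; linarith), d, hd, m / 4, by positivity, ?_⟩
    intro t ht
    obtain ⟨ht1, ht2⟩ := abs_le.mp ht
    have hre : v + (m / 2) • d + t • d = v + (m / 2 + t) • d := by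
      rw [add_smul]; abel
    rw [hre]
    refine key e he hv l hl hx (m / 2 + t) (by linarith) ?_
    have := min_le_left l l'
    rw [hm] at hm0
    linarith
  have hz' : v + (m / 2) • d ∈ e' := by
    refine key e' he' hv' l' hl' hx' (m / 2) (by positivity) ?_
    have := min_le_right l l'
    rw [hm] at hm0
    linarith
  exact H.no_cross e he e' he' hne _ hz hz'

/-- If every semiinfinite edge of a honeycomb has integer constant
dual coordinate and every nonintegral vertex has zero divergency, then every edge has
integer constant dual coordinate, and all dual coordinates of all vertices are
integers. -/
theorem stmt11 (H : Honeycomb)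
    (hb : ∀ e ∈ H.edges, IsRayL e → EdgeIntegral e)
    (hv : ∀ v ∈ H.verts, (∃ i : Fin 3, ∀ z : ℤ, dcoord i v ≠ (z : ℝ)) →
      divw H.edges H.w v = 0) :
    (∀ e ∈ H.edges, EdgeIntegral e) ∧
      ∀ v ∈ H.verts, ∀ i : Fin 3, ∃ z : ℤ, dcoord i v = (z : ℝ) := by
  have hedge := edge_integral H hb hv
  refine ⟨hedge, ?_⟩
  intro v hvV
  have hdeg := H.degree v hvV
  obtain ⟨e1, e2, e3, h1, h2, h3, h12, h13, h23⟩ := Finset.two_lt_card_iff.mp (show 2 < (H.edges.filter fun e => IsEnd v e).card by omega)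
  rw [Finset.mem_filter] at h1 h2 h3
  obtain ⟨j1, hp1⟩ := (H.pre.1 _ h1.1).2
  obtain ⟨j2, hp2⟩ := (H.pre.1 _ h2.1).2
  obtain ⟨j3, hp3⟩ := (H.pre.1 _ h3.1).2
  have hint : ∀ (jA jB : Fin 3) (eA eB : Set Pt), eA ∈ H.edges → eB ∈ H.edges →
      PerpTo jA eA → PerpTo jB eB → v ∈ eA → v ∈ eB → jA ≠ jB →
      ∀ k : Fin 3, ∃ z : ℤ, dcoord k v = (z : ℝ) := by
    intro jA jB eA eB hA hB hpA hpB hvA hvB hAB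
    exact all_int hAB (hedge eA hA jA hpA v hvA) (hedge eB hB jB hpB v hvB)
  by_cases h12' : j1 = j2
  · by_cases h13' : j1 = j3
    · -- all three edges perpendicular to the same ξ: contradiction
      exfalso
      rw [← h12'] at hp2
      rw [← h13'] at hp3
      set Dd := rayDir j1 true with hDd
      have hpt : ∀ e : Set Pt, e ∈ H.edges → v ∈ e → PerpTo j1 e →
          ∃ l : ℝ, l ≠ 0 ∧ v + l • Dd ∈ e := by
        intro e heE hev hpe
        obtain ⟨x, hxx, y, hyy, hxy⟩ := linel_two_points (H.pre.1 e heE).1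
        have pick : ∃ q ∈ e, q ≠ v := by
          by_cases hxv : x = v
          · exact ⟨y, hyy, fun hyv => hxy (by rw [hxv, hyv])⟩
          · exact ⟨x, hxx, hxv⟩
        obtain ⟨q, hq, hqv⟩ := pick
        have hdc : dcoord j1 q = dcoord j1 v := dcoord_eq_of_perp hpe hq hev
        refine ⟨pdot (q - v) Dd, ?_, ?_⟩
        · intro h0
          apply hqv
          rw [decomp_pt hdc, ← hDd, h0, zero_smul, add_zero]
        · rw [hDd, ← decomp_pt hdc]
          exact hq
      obtain ⟨l1, hl1, hm1⟩ := hpt e1 h1.1 h1.2.1 hp1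
      obtain ⟨l2, hl2, hm2⟩ := hpt e2 h2.1 h2.2.1 hp2
      obtain ⟨l3, hl3, hm3⟩ := hpt e3 h3.1 h3.2.1 hp3
      have pair : ∀ (eA eB : Set Pt), eA ∈ H.edges → eB ∈ H.edges → eA ≠ eB →
          v ∈ eA → v ∈ eB → ∀ lA lB : ℝ, v + lA • Dd ∈ eA → v + lB • Dd ∈ eB →
          (0 < lA ∧ 0 < lB) ∨ (lA < 0 ∧ lB < 0) → False := by
        intro eA eB hA hB hAB hvA hvB lA lB hxA hxB hsgn
        rcases hsgn with ⟨ha, hb⟩ | ⟨ha, hb⟩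
        · exact same_side_contra H hA hB hAB (rayDir_ne_zero j1 true) hvA hvB ha hb hxA hxB
        · refine same_side_contra H hA hB hAB (d := -Dd)
            (neg_ne_zero.mpr (rayDir_ne_zero j1 true)) hvA hvB
            (neg_pos.mpr ha) (neg_pos.mpr hb) ?_ ?_
          · rw [neg_smul_neg]; exact hxA
          · rw [neg_smul_neg]; exact hxB
      rcases hl1.lt_or_gt with n1 | p1 <;> rcases hl2.lt_or_gt with n2 | p2 <;>
        rcases hl3.lt_or_gt with n3 | p3
      · exact pair e1 e2 h1.1 h2.1 h12 h1.2.1 h2.2.1 l1 l2 hm1 hm2 (Or.inr ⟨n1, n2⟩)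
      · exact pair e1 e2 h1.1 h2.1 h12 h1.2.1 h2.2.1 l1 l2 hm1 hm2 (Or.inr ⟨n1, n2⟩)
      · exact pair e1 e3 h1.1 h3.1 h13 h1.2.1 h3.2.1 l1 l3 hm1 hm3 (Or.inr ⟨n1, n3⟩)
      · exact pair e2 e3 h2.1 h3.1 h23 h2.2.1 h3.2.1 l2 l3 hm2 hm3 (Or.inl ⟨p2, p3⟩)
      · exact pair e2 e3 h2.1 h3.1 h23 h2.2.1 h3.2.1 l2 l3 hm2 hm3 (Or.inr ⟨n2, n3⟩)
      · exact pair e1 e3 h1.1 h3.1 h13 h1.2.1 h3.2.1 l1 l3 hm1 hm3 (Or.inl ⟨p1, p3⟩)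
      · exact pair e1 e2 h1.1 h2.1 h12 h1.2.1 h2.2.1 l1 l2 hm1 hm2 (Or.inl ⟨p1, p2⟩)
      · exact pair e1 e2 h1.1 h2.1 h12 h1.2.1 h2.2.1 l1 l2 hm1 hm2 (Or.inl ⟨p1, p2⟩)
    · exact hint j1 j3 e1 e3 h1.1 h3.1 hp1 hp3 h1.2.1 h3.2.1 h13'
  · exact hint j1 j2 e1 e2 h1.1 h2.1 hp1 hp2 h1.2.1 h2.2.1 h12'
end
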